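/- Let e be a nonzero integer and let N_e be the group with presentation ⟨a, b, k | [a,k] = 1, [b,k] = 1, [a,b] = k^e⟩. Then the central cyclic subgroup ⟨k⟩ is quadratically distorted in N_e, i.e. the distortion function Δ_{⟨k⟩}^{N_e} is equivalent to n ↦ n². -/

import Mathlib

/-- The word length of `g` with respect to a generating set `S`: the least `n ≥ 0`
such that `g` is a product of `n` elements of `S ∪ S⁻¹`. -/
noncomputable def wordLength {G : Type*} [Group G] (S : Set G) (g : G) : ℕ :=
  sInf {n : ℕ | ∃ l : List G, (∀ x ∈ l, x ∈ S ∨ x⁻¹ ∈ S) ∧ l.length = n ∧ l.prod = g}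


/-- The distortion function of the subgroup generated by `A` inside the group
generated by `S`: `n ↦ max { |g|_A : g ∈ ⟨A⟩, |g|_S ≤ n }`. -/
noncomputable def distortion {G : Type*} [Group G] (S A : Set G) (n : ℕ) : ℕ :=
  sSup {m : ℕ | ∃ g ∈ Subgroup.closure A, wordLength A g = m ∧ wordLength S g ≤ n}

/-- `f` is dominated by `g`: there are positive constants `A, B, C, D, E` with
`f(x) ≤ A·g(Bx + C) + Dx + E` for all `x`. -/
def DominatedN (f g : ℕ → ℕ) : Prop :=
  ∃ A B C D E : ℕ, 0 < A ∧ 0 < B ∧ 0 < C ∧ 0 < D ∧ 0 < E ∧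
    ∀ n, f n ≤ A * g (B * n + C) + D * n + E

/-- Equivalence of nondecreasing functions: mutual domination. -/
def EquivN (f g : ℕ → ℕ) : Prop := DominatedN f g ∧ DominatedN g f


open scoped commutatorElement in
/-- The relations of the presentation
`⟨a, b, k | [a,k] = 1, [b,k] = 1, [a,b] = kᵉ⟩`, where `a, b, k` are the generators
indexed by `0, 1, 2 : Fin 3`. -/
def nilRels (e : ℤ) : Set (FreeGroup (Fin 3)) :=
  {⁅FreeGroup.of (0 : Fin 3), FreeGroup.of (2 : Fin 3)⁆, ⁅FreeGroup.of (1 : Fin 3), FreeGroup.of (2 : Fin 3)⁆,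
   ⁅FreeGroup.of (0 : Fin 3), FreeGroup.of (1 : Fin 3)⁆ * (FreeGroup.of (2 : Fin 3)) ^ (-e)}

/-- The Nil 3-manifold group `N_e = ⟨a, b, k | [a,k] = 1, [b,k] = 1, [a,b] = kᵉ⟩`,
the fundamental group of the orientable circle bundle over the torus with Euler
number `e`. -/
abbrev NilGroup (e : ℤ) := PresentedGroup (nilRels e)

/-- The generator `a` of `N_e`. -/
def nilA (e : ℤ) : NilGroup e := PresentedGroup.of 0

/-- The generator `b` of `N_e`. -/
def nilB (e : ℤ) : NilGroup e := PresentedGroup.of 1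

/-- The central fiber generator `k` of `N_e`. -/
def nilK (e : ℤ) : NilGroup e := PresentedGroup.of 2

open scoped commutatorElement


@[ext] structure Hei (e : ℤ) where
  x : ℤ
  y : ℤ
  z : ℤ

namespace Hei
variable {e : ℤ}

instance : Mul (Hei e) := ⟨fun p q => ⟨p.x + q.x, p.y + q.y, p.z + q.z - e * p.y * q.x⟩⟩
instance : One (Hei e) := ⟨⟨0, 0, 0⟩⟩
instance : Inv (Hei e) := ⟨fun p => ⟨-p.x, -p.y, -p.z - e * p.x * p.y⟩⟩

@[simp] lemma mul_x (p q : Hei e) : (p * q).x = p.x + q.x := rfl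
@[simp] lemma mul_y (p q : Hei e) : (p * q).y = p.y + q.y := rfl
@[simp] lemma mul_z (p q : Hei e) : (p * q).z = p.z + q.z - e * p.y * q.x := rfl
@[simp] lemma one_x : (1 : Hei e).x = 0 := rfl
@[simp] lemma one_y : (1 : Hei e).y = 0 := rfl
@[simp] lemma one_z : (1 : Hei e).z = 0 := rfl
@[simp] lemma inv_x (p : Hei e) : (p⁻¹).x = -p.x := rfl
@[simp] lemma inv_y (p : Hei e) : (p⁻¹).y = -p.y := rfl
@[simp] lemma inv_z (p : Hei e) : (p⁻¹).z = -p.z - e * p.x * p.y := rfl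

instance : Group (Hei e) where
  mul_assoc p q r := by ext <;> simp <;> ring
  one_mul p := by ext <;> simp
  mul_one p := by ext <;> simp
  inv_mul_cancel p := by ext <;> simp <;> ring

/-- generator a -/
def aH : Hei e := ⟨1, 0, 0⟩
/-- generator b -/
def bH : Hei e := ⟨0, 1, 0⟩
/-- generator k -/
def kH : Hei e := ⟨0, 0, 1⟩

lemma kH_pow (n : ℕ) : (kH ^ n : Hei e) = ⟨0, 0, n⟩ := by
  induction n with
  | zero => rfl
  | succ n ih =>
    rw [pow_succ, ih]
    ext <;> simp [kH] <;> push_cast <;> ring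

lemma kH_zpow (t : ℤ) : (kH ^ t : Hei e) = ⟨0, 0, t⟩ := by
  cases t with
  | ofNat n => simpa using kH_pow n
  | negSucc n => rw [zpow_negSucc, kH_pow]; ext <;> simp [Int.negSucc_eq] <;> ring

lemma rel1 : ⁅(aH : Hei e), (kH : Hei e)⁆ = 1 := by
  ext <;> simp [commutatorElement_def, aH, kH]
lemma rel2 : ⁅(bH : Hei e), (kH : Hei e)⁆ = 1 := by
  ext <;> simp [commutatorElement_def, bH, kH]
lemma rel3 : ⁅(aH : Hei e), (bH : Hei e)⁆ * kH ^ (-e) = 1 := by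
  rw [kH_zpow]; ext <;> simp [commutatorElement_def, aH, bH]

lemma prod_bound (M : ℤ) (l : List (Hei e))
    (h : ∀ p ∈ l, |p.x| ≤ M ∧ |p.y| ≤ M ∧ |p.z| ≤ M) :
    |l.prod.x| ≤ M * l.length ∧ |l.prod.y| ≤ M * l.length ∧
      |l.prod.z| ≤ M * l.length + |e| * M ^ 2 * l.length ^ 2 := by
  induction l with
  | nil => simp
  | cons a l ih =>
    obtain ⟨ha1, ha2, ha3⟩ := h a (List.mem_cons_self ..)
    have hM : 0 ≤ M := le_trans (abs_nonneg _) ha1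
    obtain ⟨ih1, ih2, ih3⟩ := ih (fun p hp => h p (List.mem_cons_of_mem _ hp))
    have he : 0 ≤ |e| := abs_nonneg e
    have hlen : (0 : ℤ) ≤ l.length := Int.natCast_nonneg _
    simp only [List.prod_cons, List.length_cons, mul_x, mul_y, mul_z]
    push_cast
    refine ⟨?_, ?_, ?_⟩
    · calc |a.x + l.prod.x| ≤ |a.x| + |l.prod.x| := abs_add_le _ _
        _ ≤ M + M * l.length := add_le_add ha1 ih1
        _ = M * (l.length + 1) := by ring
    · calc |a.y + l.prod.y| ≤ |a.y| + |l.prod.y| := abs_add_le _ _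
        _ ≤ M + M * l.length := add_le_add ha2 ih2
        _ = M * (l.length + 1) := by ring
    · have h1 : |a.z + l.prod.z - e * a.y * l.prod.x| ≤
          |a.z| + |l.prod.z| + |e| * |a.y| * |l.prod.x| := by
        calc |a.z + l.prod.z - e * a.y * l.prod.x|
            ≤ |a.z + l.prod.z| + |e * a.y * l.prod.x| := abs_sub _ _
          _ ≤ |a.z| + |l.prod.z| + |e| * |a.y| * |l.prod.x| := by
              rw [abs_mul, abs_mul]
              exact add_le_add (abs_add_le _ _) le_rfl
      refine h1.trans ?_
      have h2 : |e| * |a.y| * |l.prod.x| ≤ |e| * M * (M * l.length) := by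
        apply mul_le_mul (mul_le_mul le_rfl ha2 (abs_nonneg _) he) ih1 (abs_nonneg _)
        positivity
      calc |a.z| + |l.prod.z| + |e| * |a.y| * |l.prod.x|
          ≤ M + (M * l.length + |e| * M ^ 2 * l.length ^ 2) + |e| * M * (M * l.length) := by
            exact add_le_add (add_le_add ha3 ih3) h2
        _ ≤ M * (l.length + 1) + |e| * M ^ 2 * (l.length + 1) ^ 2 := by
            nlinarith [mul_nonneg (mul_nonneg he (sq_nonneg M)) (by linarith : (0:ℤ) ≤ (l.length : ℤ) + 1)]

lemma prod_central (M : ℤ) (l : List (Hei e))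
    (h : ∀ p ∈ l, p.x = 0 ∧ p.y = 0 ∧ |p.z| ≤ M) :
    l.prod.x = 0 ∧ l.prod.y = 0 ∧ |l.prod.z| ≤ M * l.length := by
  induction l with
  | nil => simp
  | cons a l ih =>
    obtain ⟨ha1, ha2, ha3⟩ := h a (List.mem_cons_self ..)
    obtain ⟨ih1, ih2, ih3⟩ := ih (fun p hp => h p (List.mem_cons_of_mem _ hp))
    simp only [List.prod_cons, List.length_cons, mul_x, mul_y, mul_z, ha1, ha2, ih1, ih2]
    push_cast
    refine ⟨by simp, by simp, ?_⟩
    calc |a.z + l.prod.z - e * 0 * 0| = |a.z + l.prod.z| := by ring_nf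
      _ ≤ |a.z| + |l.prod.z| := abs_add_le _ _
      _ ≤ M + M * l.length := add_le_add ha3 ih3
      _ = M * (l.length + 1) := by ring

end Hei



section Words
variable {G : Type*} [Group G] {S : Set G} {g h : G}

/-- `l` is a word over `S ∪ S⁻¹` with product `g`. -/
def IsWord (S : Set G) (l : List G) (g : G) : Prop :=
  (∀ x ∈ l, x ∈ S ∨ x⁻¹ ∈ S) ∧ l.prod = g

lemma IsWord.one : IsWord S [] (1 : G) := ⟨by simp, rfl⟩

lemma IsWord.mul {l l' : List G} (hl : IsWord S l g) (hl' : IsWord S l' h) :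
    IsWord S (l ++ l') (g * h) := by
  refine ⟨fun x hx => ?_, by rw [List.prod_append, hl.2, hl'.2]⟩
  rcases List.mem_append.1 hx with h | h
  exacts [hl.1 x h, hl'.1 x h]

lemma IsWord.inv {l : List G} (hl : IsWord S l g) :
    IsWord S ((l.map (fun x => x⁻¹)).reverse) g⁻¹ := by
  refine ⟨fun x hx => ?_, by rw [← List.prod_inv_reverse, hl.2]⟩
  simp only [List.mem_reverse, List.mem_map] at hx
  obtain ⟨y, hy, rfl⟩ := hx
  rcases hl.1 y hy with h | h
  · exact Or.inr (by simpa using h)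
  · exact Or.inl h

lemma IsWord.pow {l : List G} (hl : IsWord S l g) (n : ℕ) :
    ∃ l' : List G, IsWord S l' (g ^ n) ∧ l'.length = n * l.length := by
  induction n with
  | zero => exact ⟨[], by simpa using IsWord.one, by simp⟩
  | succ n ih =>
    obtain ⟨l', hl', hlen⟩ := ih
    exact ⟨l' ++ l, by rw [pow_succ]; exact hl'.mul hl,
      by simp [hlen]; ring⟩

lemma IsWord.zpow {l : List G} (hl : IsWord S l g) (t : ℤ) :
    ∃ l' : List G, IsWord S l' (g ^ t) ∧ l'.length = t.natAbs * l.length := by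
  cases t with
  | ofNat n => simpa using hl.pow n
  | negSucc n =>
    obtain ⟨l', hl', hlen⟩ := hl.pow (n + 1)
    refine ⟨(l'.map (fun x => x⁻¹)).reverse, ?_, by simpa using hlen⟩
    rw [zpow_negSucc]
    exact hl'.inv

lemma IsWord.wordLength_le {l : List G} (hl : IsWord S l g) :
    wordLength S g ≤ l.length :=
  Nat.sInf_le ⟨l, hl.1, rfl, hl.2⟩

lemma exists_isWord_of_mem_closure (hg : g ∈ Subgroup.closure S) :
    ∃ l, IsWord S l g := by
  induction hg using Subgroup.closure_induction with
  | mem x hx =>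
    refine ⟨[x], fun y hy => ?_, by simp⟩
    rw [List.mem_singleton] at hy
    subst hy
    exact Or.inl hx
  | one => exact ⟨[], IsWord.one⟩
  | mul x y _ _ hx hy =>
    obtain ⟨l, hl⟩ := hx; obtain ⟨l', hl'⟩ := hy
    exact ⟨l ++ l', hl.mul hl'⟩
  | inv x _ hx =>
    obtain ⟨l, hl⟩ := hx
    exact ⟨_, hl.inv⟩

lemma exists_min_word (hg : g ∈ Subgroup.closure S) :
    ∃ l, IsWord S l g ∧ l.length = wordLength S g := by
  obtain ⟨l0, hl0⟩ := exists_isWord_of_mem_closure hg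
  have hne : {n : ℕ | ∃ l : List G, (∀ x ∈ l, x ∈ S ∨ x⁻¹ ∈ S) ∧ l.length = n ∧ l.prod = g}.Nonempty :=
    ⟨l0.length, l0, hl0.1, rfl, hl0.2⟩
  obtain ⟨l, h1, h2, h3⟩ := Nat.sInf_mem hne
  exact ⟨l, ⟨h1, h3⟩, h2⟩

lemma wordLength_one : wordLength S (1 : G) = 0 :=
  Nat.le_zero.1 (by simpa using IsWord.one.wordLength_le (S := S))

end Words

namespace NilProof
open Hei

variable {e : ℤ}

/-- the images of the generators in the concrete model -/
def fH (e : ℤ) : Fin 3 → Hei e := ![aH, bH, kH]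

@[simp] lemma fH0 : fH e 0 = aH := rfl
@[simp] lemma fH1 : fH e 1 = bH := rfl
@[simp] lemma fH2 : fH e 2 = kH := rfl

lemma fH_rels : ∀ r ∈ nilRels e, FreeGroup.lift (fH e) r = 1 := by
  rintro r (rfl | rfl | rfl)
  · rw [map_commutatorElement, FreeGroup.lift_apply_of, FreeGroup.lift_apply_of, fH0, fH2]
    exact rel1
  · rw [map_commutatorElement, FreeGroup.lift_apply_of, FreeGroup.lift_apply_of, fH1, fH2]
    exact rel2
  · rw [map_mul, map_commutatorElement, map_zpow, FreeGroup.lift_apply_of, FreeGroup.lift_apply_of,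
      FreeGroup.lift_apply_of, fH0, fH1, fH2]
    exact rel3

/-- The homomorphism from the presented group to the concrete model. -/
noncomputable def φ (e : ℤ) : NilGroup e →* Hei e := PresentedGroup.toGroup fH_rels

@[simp] lemma φ_A : φ e (nilA e) = aH := PresentedGroup.toGroup.of _
@[simp] lemma φ_B : φ e (nilB e) = bH := PresentedGroup.toGroup.of _
@[simp] lemma φ_K : φ e (nilK e) = kH := PresentedGroup.toGroup.of _

lemma rel_one {r : FreeGroup (Fin 3)} (hr : r ∈ nilRels e) :
    PresentedGroup.mk (nilRels e) r = 1 :=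
  (QuotientGroup.eq_one_iff r).mpr (Subgroup.subset_normalClosure hr)

lemma commAK : Commute (nilA e) (nilK e) :=
  commutatorElement_eq_one_iff_commute.1 <| by
    have := rel_one (e := e) (Set.mem_insert _ _)
    rwa [map_commutatorElement] at this

lemma commBK : Commute (nilB e) (nilK e) :=
  commutatorElement_eq_one_iff_commute.1 <| by
    have := rel_one (e := e) (Set.mem_insert_of_mem _ (Set.mem_insert _ _))
    rwa [map_commutatorElement] at this

lemma relAB' : ⁅nilA e, nilB e⁆ * nilK e ^ (-e) = 1 := by
  have := rel_one (e := e)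
    (Set.mem_insert_of_mem _ (Set.mem_insert_of_mem _ rfl))
  rw [map_mul, map_commutatorElement, map_zpow] at this
  exact this

lemma relAB : ⁅nilA e, nilB e⁆ = nilK e ^ e := by
  have h := mul_eq_one_iff_eq_inv.1 (relAB' (e := e))
  rwa [← zpow_neg, neg_neg] at h

lemma swapAB : nilA e * nilB e = nilK e ^ e * (nilB e * nilA e) := by
  have h := relAB (e := e)
  rw [commutatorElement_def] at h
  calc nilA e * nilB e
      = (nilA e * nilB e * (nilA e)⁻¹ * (nilB e)⁻¹) * (nilB e * nilA e) := by group
    _ = nilK e ^ e * (nilB e * nilA e) := by rw [h]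

lemma commK_Bpow (m : ℕ) : Commute (nilK e ^ e) (nilB e ^ m) :=
  ((commBK (e := e)).symm.zpow_left e).pow_right m

lemma L1 (m : ℕ) : nilA e * nilB e ^ m = nilK e ^ (e * m) * (nilB e ^ m * nilA e) := by
  induction m with
  | zero => simp
  | succ m ih =>
    have hc := commK_Bpow (e := e) m
    calc nilA e * nilB e ^ (m + 1)
        = (nilA e * nilB e ^ m) * nilB e := by rw [pow_succ, mul_assoc]
      _ = nilK e ^ (e * m) * (nilB e ^ m * (nilA e * nilB e)) := by rw [ih]; group
      _ = nilK e ^ (e * m) * (nilB e ^ m * (nilK e ^ e * (nilB e * nilA e))) := by rw [swapAB]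
      _ = nilK e ^ (e * m) * (nilK e ^ e * (nilB e ^ m * (nilB e * nilA e))) := by
          rw [← mul_assoc (nilB e ^ m), hc.symm.eq, mul_assoc]
      _ = nilK e ^ (e * (m + 1)) * (nilB e ^ (m + 1) * nilA e) := by
          rw [pow_succ]
          rw [show (e * (m + 1) : ℤ) = e * m + e by push_cast; ring, zpow_add]
          group
  
lemma L2 (m n : ℕ) : nilA e ^ n * nilB e ^ m =
    nilK e ^ (e * m * n) * (nilB e ^ m * nilA e ^ n) := by
  induction n with
  | zero => simp
  | succ n ih =>
    have hc : Commute (nilA e) (nilK e ^ (e * m * n)) := (commAK (e := e)).zpow_right _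
    calc nilA e ^ (n + 1) * nilB e ^ m
        = nilA e * (nilA e ^ n * nilB e ^ m) := by rw [pow_succ']; group
      _ = nilA e * (nilK e ^ (e * m * n) * (nilB e ^ m * nilA e ^ n)) := by rw [ih]
      _ = nilK e ^ (e * m * n) * ((nilA e * nilB e ^ m) * nilA e ^ n) := by
          rw [← mul_assoc, hc.eq]; group
      _ = nilK e ^ (e * m * n) * ((nilK e ^ (e * m) * (nilB e ^ m * nilA e)) * nilA e ^ n) := by
          rw [L1]
      _ = nilK e ^ (e * m * (n + 1)) * (nilB e ^ m * nilA e ^ (n + 1)) := by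
          rw [show (e * m * (n + 1) : ℤ) = e * m * n + e * m by push_cast; ring, zpow_add,
            pow_succ']
          group

lemma key (n : ℕ) : nilA e ^ n * nilB e ^ n * (nilA e ^ n)⁻¹ * (nilB e ^ n)⁻¹ =
    nilK e ^ (e * n * n) := by
  rw [L2]
  group

end NilProof

section MainAux
open Hei NilProof

variable {e : ℤ}

/-- coordinate bound of an element of the model -/
def cb (p : Hei e) : ℕ := max (max p.x.natAbs p.y.natAbs) p.z.natAbs

lemma cb_x {p : Hei e} {M : ℕ} (h : cb p ≤ M) : |p.x| ≤ (M : ℤ) := by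
  rw [Int.abs_eq_natAbs]; exact_mod_cast le_trans (le_trans (le_max_left _ _) (le_max_left _ _)) h
lemma cb_y {p : Hei e} {M : ℕ} (h : cb p ≤ M) : |p.y| ≤ (M : ℤ) := by
  rw [Int.abs_eq_natAbs]; exact_mod_cast le_trans (le_trans (le_max_right _ _) (le_max_left _ _)) h
lemma cb_z {p : Hei e} {M : ℕ} (h : cb p ≤ M) : |p.z| ≤ (M : ℤ) := by
  rw [Int.abs_eq_natAbs]; exact_mod_cast le_trans (le_max_right _ _) h

/-- uniform bound for the images of the generating set and its inverses -/
noncomputable def MS (e : ℤ) (S : Finset (NilGroup e)) : ℕ :=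
  S.sup fun s => max (cb (φ e s)) (cb (φ e s⁻¹))

lemma letter_cb_le {S : Finset (NilGroup e)} {x : NilGroup e}
    (hx : x ∈ (S : Set (NilGroup e)) ∨ x⁻¹ ∈ (S : Set (NilGroup e))) :
    cb (φ e x) ≤ MS e S := by
  rcases hx with hx | hx
  · exact le_trans (le_max_left _ _)
      (Finset.le_sup (f := fun s => max (cb (φ e s)) (cb (φ e s⁻¹))) (Finset.mem_coe.1 hx))
  · have h : cb (φ e x) = cb (φ e (x⁻¹)⁻¹) := by rw [inv_inv]
    rw [h]
    exact le_trans (le_max_right (cb (φ e x⁻¹)) _)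
      (Finset.le_sup (f := fun s => max (cb (φ e s)) (cb (φ e s⁻¹))) (Finset.mem_coe.1 hx))

/-- key geometric bound: the fiber coordinate of an element of `S`-length at most `n`
is at most quadratic in `n`. -/
lemma z_bound {S : Finset (NilGroup e)} (hS : Subgroup.closure (S : Set (NilGroup e)) = ⊤)
    (g : NilGroup e) (n : ℕ) (hg : wordLength (S : Set (NilGroup e)) g ≤ n) :
    |(φ e g).z| ≤ (MS e S : ℤ) * n + |e| * (MS e S : ℤ) ^ 2 * (n : ℤ) ^ 2 := by
  obtain ⟨l, hl, hlen⟩ := exists_min_word (S := (S : Set (NilGroup e))) (g := g)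
    (by rw [hS]; trivial)
  have hmem : ∀ p ∈ l.map (φ e), |p.x| ≤ (MS e S : ℤ) ∧ |p.y| ≤ (MS e S : ℤ) ∧
      |p.z| ≤ (MS e S : ℤ) := by
    intro p hp
    obtain ⟨x, hx, rfl⟩ := List.mem_map.1 hp
    have := letter_cb_le (S := S) (hl.1 x hx)
    exact ⟨cb_x this, cb_y this, cb_z this⟩
  have hb := Hei.prod_bound (MS e S : ℤ) (l.map (φ e)) hmem
  have hprod : (l.map (φ e)).prod = φ e g := by rw [← map_list_prod, hl.2]
  have hlength : ((l.map (φ e)).length : ℤ) ≤ (n : ℤ) := by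
    simp only [List.length_map]
    exact_mod_cast hlen ▸ hg
  have h0 : (0 : ℤ) ≤ (MS e S : ℤ) := Int.natCast_nonneg _
  have h1 : (0 : ℤ) ≤ ((l.map (φ e)).length : ℤ) := Int.natCast_nonneg _
  refine le_trans (hprod ▸ hb.2.2) ?_
  have he0 : (0 : ℤ) ≤ |e| := abs_nonneg e
  refine add_le_add (mul_le_mul le_rfl hlength h1 h0) ?_
  refine mul_le_mul le_rfl ?_ (by positivity) (by positivity)
  exact pow_le_pow_left₀ h1 hlength 2

/-- every member of the distortion set is bounded. -/
lemma distortion_set_bound {S B : Finset (NilGroup e)}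
    (hS : Subgroup.closure (S : Set (NilGroup e)) = ⊤)
    (hB : Subgroup.closure (B : Set (NilGroup e)) = Subgroup.zpowers (nilK e))
    {lK : List (NilGroup e)} (hlK : IsWord (B : Set (NilGroup e)) lK (nilK e)) (n : ℕ) :
    ∀ m ∈ {m : ℕ | ∃ g ∈ Subgroup.closure (B : Set (NilGroup e)),
        wordLength (B : Set (NilGroup e)) g = m ∧ wordLength (S : Set (NilGroup e)) g ≤ n},
      m ≤ lK.length * (MS e S * n + e.natAbs * (MS e S) ^ 2 * n ^ 2) := by
  rintro m ⟨g, hg, rfl, hgn⟩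
  rw [hB] at hg
  obtain ⟨t, rfl⟩ := Subgroup.mem_zpowers_iff.1 hg
  have hz : (φ e (nilK e ^ t)).z = t := by rw [map_zpow, φ_K, kH_zpow]
  have hbound := z_bound hS (nilK e ^ t) n hgn
  rw [hz] at hbound
  have htabs0 : (t.natAbs : ℤ) ≤ (MS e S : ℤ) * n + (e.natAbs : ℤ) * (MS e S : ℤ) ^ 2 * (n : ℤ) ^ 2 := by
    rw [Int.natCast_natAbs, Int.natCast_natAbs]
    exact hbound
  have htabs : t.natAbs ≤ MS e S * n + e.natAbs * (MS e S) ^ 2 * n ^ 2 := by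
    exact_mod_cast htabs0
  obtain ⟨l', hl', hlen'⟩ := hlK.zpow t
  calc wordLength (B : Set (NilGroup e)) (nilK e ^ t) ≤ l'.length := hl'.wordLength_le
    _ = t.natAbs * lK.length := hlen'
    _ ≤ (MS e S * n + e.natAbs * (MS e S) ^ 2 * n ^ 2) * lK.length := by
        exact Nat.mul_le_mul_right _ htabs
    _ = lK.length * (MS e S * n + e.natAbs * (MS e S) ^ 2 * n ^ 2) := Nat.mul_comm _ _

lemma zero_mem_distortion_set {e : ℤ} (S B : Finset (NilGroup e)) (n : ℕ) :
    0 ∈ {m : ℕ | ∃ g ∈ Subgroup.closure (B : Set (NilGroup e)),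
        wordLength (B : Set (NilGroup e)) g = m ∧ wordLength (S : Set (NilGroup e)) g ≤ n} :=
  ⟨1, Subgroup.one_mem _, wordLength_one, by rw [wordLength_one]; exact Nat.zero_le _⟩

end MainAux

/-- For `e ≠ 0`, the central cyclic subgroup `⟨k⟩` is quadratically
distorted in `N_e = ⟨a, b, k | [a,k] = 1, [b,k] = 1, [a,b] = kᵉ⟩`: its distortion
function is equivalent to `n ↦ n²`. -/
theorem center_quadratically_distorted_nilGroup (e : ℤ) (he : e ≠ 0)
    (S : Finset (NilGroup e)) (hS : Subgroup.closure (S : Set (NilGroup e)) = ⊤)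
    (B : Finset (NilGroup e))
    (hB : Subgroup.closure (B : Set (NilGroup e)) = Subgroup.zpowers (nilK e)) :
    EquivN (distortion (S : Set (NilGroup e)) (B : Set (NilGroup e))) (fun n => n ^ 2) := by
  classical
  open Hei NilProof in
  -- a word for `k` over `B`
  have hKmem : nilK e ∈ Subgroup.closure (B : Set (NilGroup e)) := by
    rw [hB]; exact Subgroup.mem_zpowers _
  obtain ⟨lK, hlK⟩ := exists_isWord_of_mem_closure hKmem
  -- words for `a` and `b` over `S`
  obtain ⟨lA, hlA⟩ := exists_isWord_of_mem_closure
    (show nilA e ∈ Subgroup.closure (S : Set (NilGroup e)) by rw [hS]; trivial)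
  obtain ⟨lB, hlB⟩ := exists_isWord_of_mem_closure
    (show nilB e ∈ Subgroup.closure (S : Set (NilGroup e)) by rw [hS]; trivial)
  set dSet : ℕ → Set ℕ := fun n => {m : ℕ | ∃ g ∈ Subgroup.closure (B : Set (NilGroup e)),
      wordLength (B : Set (NilGroup e)) g = m ∧ wordLength (S : Set (NilGroup e)) g ≤ n}
    with hdSet
  have hbdd : ∀ n, ∀ m ∈ dSet n, m ≤ lK.length * (MS e S * n + e.natAbs * (MS e S) ^ 2 * n ^ 2) :=
    fun n => distortion_set_bound hS hB hlK n
  have hBddAbove : ∀ n, BddAbove (dSet n) := fun n => ⟨_, fun m hm => hbdd n m hm⟩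
  constructor
  · -- distortion ≼ n²
    refine ⟨lK.length * (MS e S + e.natAbs * (MS e S) ^ 2) + 1, 1, 1, 1, 1,
      Nat.succ_pos _, one_pos, one_pos, one_pos, one_pos, fun n => ?_⟩
    have h1 : distortion (S : Set (NilGroup e)) (B : Set (NilGroup e)) n ≤
        lK.length * (MS e S * n + e.natAbs * (MS e S) ^ 2 * n ^ 2) := by
      refine csSup_le ⟨0, zero_mem_distortion_set S B n⟩ (hbdd n)
    refine h1.trans ?_
    have hn1 : n ≤ (1 * n + 1) ^ 2 := by nlinarith
    have hn2 : n ^ 2 ≤ (1 * n + 1) ^ 2 := by nlinarith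
    calc lK.length * (MS e S * n + e.natAbs * (MS e S) ^ 2 * n ^ 2)
        ≤ lK.length * (MS e S * ((1 * n + 1) ^ 2) + e.natAbs * (MS e S) ^ 2 * ((1 * n + 1) ^ 2)) := by
          refine Nat.mul_le_mul_left _ (Nat.add_le_add ?_ ?_)
          · exact Nat.mul_le_mul_left _ hn1
          · exact Nat.mul_le_mul_left _ hn2
      _ = lK.length * (MS e S + e.natAbs * (MS e S) ^ 2) * ((1 * n + 1) ^ 2) := by ring
      _ ≤ (lK.length * (MS e S + e.natAbs * (MS e S) ^ 2) + 1) * ((fun n => n ^ 2) (1 * n + 1)) + 1 * n + 1 := by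
          simp only []
          nlinarith
  · -- n² ≼ distortion
    set MB : ℕ := B.sup (fun b => (φ e b).z.natAbs) with hMB
    set C0 : ℕ := 2 * (lA.length + lB.length) + 1 with hC0
    refine ⟨MB + 1, C0, 1, 1, 1, Nat.succ_pos _, Nat.succ_pos _, one_pos, one_pos, one_pos,
      fun n => ?_⟩
    -- the element kᵉⁿ² = [aⁿ, bⁿ]
    set g : NilGroup e := nilK e ^ (e * (n : ℤ) * (n : ℤ)) with hg
    have hgkey : nilA e ^ n * nilB e ^ n * (nilA e ^ n)⁻¹ * (nilB e ^ n)⁻¹ = g := by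
      rw [hg]; exact_mod_cast key n
    -- a short word for g over S
    obtain ⟨lAn, hlAn, hlAnlen⟩ := hlA.pow n
    obtain ⟨lBn, hlBn, hlBnlen⟩ := hlB.pow n
    have hword : IsWord (S : Set (NilGroup e))
        (lAn ++ lBn ++ (lAn.map (fun x => x⁻¹)).reverse ++ (lBn.map (fun x => x⁻¹)).reverse) g := by
      rw [← hgkey]
      exact ((hlAn.mul hlBn).mul hlAn.inv).mul hlBn.inv
    have hSlen : wordLength (S : Set (NilGroup e)) g ≤ C0 * n + 1 := by
      refine hword.wordLength_le.trans ?_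
      simp only [List.length_append, List.length_reverse, List.length_map, hlAnlen, hlBnlen, hC0]
      ring_nf
      omega
    have hgmem : g ∈ Subgroup.closure (B : Set (NilGroup e)) := by
      rw [hB, hg]; exact Subgroup.zpow_mem _ (Subgroup.mem_zpowers _) _
    -- w := wordLength B g is in the distortion set at C0 * n + 1
    have hwmem : wordLength (B : Set (NilGroup e)) g ∈ dSet (C0 * n + 1) :=
      ⟨g, hgmem, rfl, hSlen⟩
    have hwle : wordLength (B : Set (NilGroup e)) g ≤
        distortion (S : Set (NilGroup e)) (B : Set (NilGroup e)) (C0 * n + 1) :=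
      le_csSup (hBddAbove _) hwmem
    -- lower bound for w
    obtain ⟨l, hl, hllen⟩ := exists_min_word hgmem
    have hlmem : ∀ p ∈ l.map (φ e), p.x = 0 ∧ p.y = 0 ∧ |p.z| ≤ (MB : ℤ) := by
      intro p hp
      obtain ⟨x, hx, rfl⟩ := List.mem_map.1 hp
      have hcase : ∀ y : NilGroup e, y ∈ (B : Set (NilGroup e)) →
          (φ e y).x = 0 ∧ (φ e y).y = 0 ∧ |(φ e y).z| ≤ (MB : ℤ) := by
        intro y hy
        have hyz : y ∈ Subgroup.zpowers (nilK e) := by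
          rw [← hB]; exact Subgroup.subset_closure hy
        obtain ⟨m, rfl⟩ := Subgroup.mem_zpowers_iff.1 hyz
        have hφ : φ e (nilK e ^ m) = (⟨0, 0, m⟩ : Hei e) := by rw [map_zpow, φ_K, kH_zpow]
        refine ⟨by rw [hφ], by rw [hφ], ?_⟩
        rw [Int.abs_eq_natAbs]
        exact_mod_cast Finset.le_sup (f := fun b => (φ e b).z.natAbs) hy
      rcases hl.1 x hx with hx' | hx'
      · exact hcase x hx'
      · obtain ⟨h1, h2, h3⟩ := hcase x⁻¹ hx'
        have hinv : φ e x = (φ e x⁻¹)⁻¹ := by rw [← map_inv, inv_inv]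
        have hx0 : (φ e x).x = 0 := by rw [hinv, Hei.inv_x, h1, neg_zero]
        have hy0 : (φ e x).y = 0 := by rw [hinv, Hei.inv_y, h2, neg_zero]
        have hz0 : |(φ e x).z| ≤ (MB : ℤ) := by
          rw [hinv, Hei.inv_z, h1, h2]
          have hh : -(φ e x⁻¹).z - e * 0 * 0 = -(φ e x⁻¹).z := by ring
          rw [hh, abs_neg]
          exact h3
        exact ⟨hx0, hy0, hz0⟩
    have hcentral := Hei.prod_central (MB : ℤ) (l.map (φ e)) hlmem
    have hprodz : ((l.map (φ e)).prod).z = e * (n : ℤ) * (n : ℤ) := by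
      rw [← map_list_prod, hl.2, hg, map_zpow, φ_K, kH_zpow]
    have hzineq : |e * (n : ℤ) * (n : ℤ)| ≤ (MB : ℤ) * l.length := by
      have := hcentral.2.2
      rw [hprodz] at this
      simpa using this
    have he1 : (1 : ℤ) ≤ |e| := by
      have := abs_pos.mpr he
      omega
    have hnsq : (n : ℤ) ^ 2 ≤ (MB : ℤ) * l.length := by
      refine le_trans ?_ hzineq
      rw [abs_mul, abs_mul]
      have : |(n : ℤ)| = (n : ℤ) := abs_of_nonneg (Int.natCast_nonneg _)
      rw [this]
      nlinarith [Int.natCast_nonneg n]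
    have hnat : n ^ 2 ≤ MB * l.length := by exact_mod_cast hnsq
    rw [hllen] at hnat
    calc n ^ 2 ≤ MB * wordLength (B : Set (NilGroup e)) g := hnat
      _ ≤ (MB + 1) * distortion (S : Set (NilGroup e)) (B : Set (NilGroup e)) (C0 * n + 1) := by
          exact Nat.mul_le_mul (Nat.le_succ _) hwle
      _ ≤ (MB + 1) * distortion (S : Set (NilGroup e)) (B : Set (NilGroup e)) (C0 * n + 1) + 1 * n + 1 := by
          omega
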